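/- Let Σ* be a symmetric positive definite d×d real matrix and Σ1, Σ2 symmetric positive semidefinite d×d real matrices such that Σ*^{1/2}Σ1^{1/2} = Σ1^{1/2}Σ*^{1/2} and Σ*^{1/2}Σ2^{1/2} = Σ2^{1/2}Σ*^{1/2}. Then for j = 1, 2, S(Σ*,Σj) = Σj^{1/2}Σ*^{-1/2}, so that φ_{μ*}(N(mj,Σj)) = (mj − Σj^{1/2}Σ*^{-1/2}m*, Σj^{1/2}Σ*^{-1/2} − I_d); moreover ‖φ_{μ*}(N(m1,Σ1)) − φ_{μ*}(N(m2,Σ2))‖²_{(m*,Σ*)} = ‖m1 − m2‖² + tr((Σ1^{1/2} − Σ2^{1/2})²). -/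

import Mathlib

open MeasureTheory Matrix Filter ProbabilityTheory

open scoped MatrixOrder

open Classical in
/-- The unique symmetric positive semidefinite square root of a positive semidefinite real
matrix (junk value `0` if the matrix is not positive semidefinite). -/
noncomputable def matSqrt {d : ℕ} (A : Matrix (Fin d) (Fin d) ℝ) : Matrix (Fin d) (Fin d) ℝ :=
  if h : A.PosSemidef then
    (h.1.eigenvectorUnitary : Matrix (Fin d) (Fin d) ℝ) *
      diagonal ((↑) ∘ (√·) ∘ h.1.eigenvalues) *
      (star h.1.eigenvectorUnitary : Matrix (Fin d) (Fin d) ℝ)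
  else 0

lemma matSqrt_eq_cfc {d : ℕ} {A : Matrix (Fin d) (Fin d) ℝ} (h : A.PosSemidef) :
    matSqrt A = CFC.sqrt A := by
  rw [matSqrt, dif_pos h, CFC.sqrt_eq_cfc, cfc_nnreal_eq_real _ A h.nonneg, h.1.cfc_eq]
  simp only [IsHermitian.cfc, Unitary.conjStarAlgAut_apply]
  congr 3
  funext i
  simp [h.eigenvalues_nonneg i]

/-- `S(Σ₁, Σ₂) = Σ₁^{-1/2} (Σ₁^{1/2} Σ₂ Σ₁^{1/2})^{1/2} Σ₁^{-1/2}`. -/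
noncomputable def Smat {d : ℕ} (S1 S2 : Matrix (Fin d) (Fin d) ℝ) : Matrix (Fin d) (Fin d) ℝ :=
  (matSqrt S1)⁻¹ * matSqrt (matSqrt S1 * S2 * matSqrt S1) * (matSqrt S1)⁻¹

open Classical in
/-- The Gaussian measure `N(m, Σ)` on `ℝ^d`, realized as the pushforward of a product of
standard real Gaussians under `x ↦ m + Σ^{1/2} x` (junk value `0` if `Σ` is not psd). -/
noncomputable def gaussianMeasure {d : ℕ} (m : Fin d → ℝ) (S : Matrix (Fin d) (Fin d) ℝ) :
    Measure (Fin d → ℝ) :=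
  if _h : S.PosSemidef then
    (Measure.pi fun _ : Fin d => gaussianReal 0 1).map (fun x => m + (matSqrt S).mulVec x)
  else 0

/-- Squared euclidean distance on `ℝ^d`. -/
def sqDist {d : ℕ} (x y : Fin d → ℝ) : ℝ := ∑ i, (x i - y i) ^ 2

/-- The 2-Wasserstein distance between two measures on `ℝ^d` (with the euclidean cost). -/
noncomputable def W2 {d : ℕ} (μ ν : Measure (Fin d → ℝ)) : ℝ :=
  Real.sqrt (⨅ π ∈ {π : Measure ((Fin d → ℝ) × (Fin d → ℝ)) |
      IsProbabilityMeasure π ∧ π.map Prod.fst = μ ∧ π.map Prod.snd = ν},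
    ∫⁻ p, ENNReal.ofReal (sqDist p.1 p.2) ∂π).toReal

/-- The inner product `⟨(a,V),(b,U)⟩_{(m*,Σ*)}` on `Ξ_d`. -/
noncomputable def xiInner {d : ℕ} (ms : Fin d → ℝ) (Ss : Matrix (Fin d) (Fin d) ℝ)
    (a : Fin d → ℝ) (V : Matrix (Fin d) (Fin d) ℝ)
    (b : Fin d → ℝ) (U : Matrix (Fin d) (Fin d) ℝ) : ℝ :=
  (a + V.mulVec ms) ⬝ᵥ (b + U.mulVec ms) + (V * Ss * U).trace

/-- The squared norm `‖(a,V)‖²_{(m*,Σ*)} = ‖a + V m*‖² + tr(V Σ* V)` on `Ξ_d`. -/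
noncomputable def xiNormSq {d : ℕ} (ms : Fin d → ℝ) (Ss : Matrix (Fin d) (Fin d) ℝ)
    (a : Fin d → ℝ) (V : Matrix (Fin d) (Fin d) ℝ) : ℝ :=
  (∑ i, (a i + V.mulVec ms i) ^ 2) + (V * Ss * V).trace

/-- The norm `‖(a,V)‖_{(m*,Σ*)}` on `Ξ_d`. -/
noncomputable def xiNorm {d : ℕ} (ms : Fin d → ℝ) (Ss : Matrix (Fin d) (Fin d) ℝ)
    (a : Fin d → ℝ) (V : Matrix (Fin d) (Fin d) ℝ) : ℝ :=
  Real.sqrt (xiNormSq ms Ss a V)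

lemma trace_ct_mul_self_nonneg {d : ℕ} (X : Matrix (Fin d) (Fin d) ℝ) : 0 ≤ (Xᴴ * X).trace := by
  simp only [Matrix.trace, Matrix.diag, Matrix.mul_apply, Matrix.conjTranspose_apply, star_trivial]
  exact Finset.sum_nonneg fun i _ => Finset.sum_nonneg fun j _ => mul_self_nonneg _

lemma eq_zero_of_trace_ct_mul_self {d : ℕ} (X : Matrix (Fin d) (Fin d) ℝ)
    (h : (Xᴴ * X).trace ≤ 0) : X = 0 := by
  have h0 : (Xᴴ * X).trace = 0 := le_antisymm h (trace_ct_mul_self_nonneg X)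
  ext i j
  have h1 : ∑ k, ∑ l, X l k ^ 2 = 0 := by
    simpa [Matrix.trace, Matrix.diag, Matrix.mul_apply, Matrix.conjTranspose_apply, sq] using h0
  have h2 : ∀ k ∈ Finset.univ, (∑ l, X l k ^ 2 : ℝ) = 0 := by
    rw [← Finset.sum_eq_zero_iff_of_nonneg (fun k _ => by positivity)]
    exact h1
  have h3 := h2 j (Finset.mem_univ j)
  have h4 : ∀ l ∈ Finset.univ, (X l j ^ 2 : ℝ) = 0 := by
    rw [← Finset.sum_eq_zero_iff_of_nonneg (fun l _ => by positivity)]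
    exact h3
  simpa using pow_eq_zero_iff (n := 2) (by norm_num) |>.mp (h4 i (Finset.mem_univ i))

lemma psd_trace_nonneg {d : ℕ} {M : Matrix (Fin d) (Fin d) ℝ} (hM : M.PosSemidef) : 0 ≤ M.trace := by
  refine Finset.sum_nonneg fun i _ => ?_
  have := hM.diag_nonneg (i := i)
  simpa [dotProduct, Matrix.mulVec, Pi.single_apply, Finset.sum_ite_eq, Matrix.diag] using this

lemma commute_of_commute_sq {d : ℕ} {D B : Matrix (Fin d) (Fin d) ℝ} (hD : D.PosSemidef)
    (hDdet : IsUnit D.det) (hB : B.IsHermitian) (h : B * (D * D) = (D * D) * B) :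
    B * D = D * B := by
  set F := D * B - B * D with hF
  have hFt : Fᴴ = -F := by
    rw [hF, conjTranspose_sub, conjTranspose_mul, conjTranspose_mul, hD.isHermitian, hB]
    abel
  have hDF : D * F = -(F * D) := by
    have key : D * D * B = B * (D * D) := h.symm
    rw [hF, mul_sub, sub_mul, ← mul_assoc, ← mul_assoc, mul_assoc B D D, key]
    abel
  have hM : (Fᴴ * D * F).PosSemidef := hD.conjTranspose_mul_mul_same F
  have h1 : F * D = -(D * F) := by rw [hDF]; abel
  have hMeq : Fᴴ * D * F = D * (F * F) := by
    calc Fᴴ * D * F = -(F * D * F) := by rw [hFt]; noncomm_ring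
    _ = -(-(D * F) * F) := by rw [h1]
    _ = D * (F * F) := by noncomm_ring
  have hFF : Fᴴ * F = -(F * F) := by rw [hFt, Matrix.neg_mul]
  set G := CFC.sqrt D with hGdef
  have hG : G * G = D := CFC.sqrt_mul_sqrt_self D hD.nonneg
  have hGh : Gᴴ = G := (CFC.sqrt_nonneg D).posSemidef.isHermitian
  have htr : ((F * G)ᴴ * (F * G)).trace = (D * (Fᴴ * F)).trace := by
    rw [conjTranspose_mul, hGh, ← Matrix.mul_assoc, Matrix.trace_mul_comm,
      ← Matrix.mul_assoc, ← Matrix.mul_assoc, hG, Matrix.mul_assoc]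
  have hle : ((F * G)ᴴ * (F * G)).trace ≤ 0 := by
    have h0 : 0 ≤ (Fᴴ * D * F).trace := psd_trace_nonneg hM
    rw [hMeq] at h0
    rw [htr, hFF, mul_neg, trace_neg]
    linarith
  have hFG : F * G = 0 := eq_zero_of_trace_ct_mul_self _ hle
  have hFD : F * D = 0 := by rw [← hG, ← Matrix.mul_assoc, hFG, Matrix.zero_mul]
  have hF0 : F = 0 := by
    have := congrArg (· * D⁻¹) hFD
    simpa [Matrix.mul_assoc, Matrix.mul_nonsing_inv D hDdet] using this
  have : D * B = B * D := by
    have := sub_eq_zero.mp hF0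
    linear_combination (norm := noncomm_ring) this
  exact this.symm

lemma mul_psd_of_commute {d : ℕ} {A B : Matrix (Fin d) (Fin d) ℝ} (hA : A.PosSemidef)
    (hAdet : IsUnit A.det) (hB : B.PosSemidef) (hc : A * B = B * A) :
    (A * B).PosSemidef := by
  set G := CFC.sqrt A with hGdef
  have hG : G * G = A := CFC.sqrt_mul_sqrt_self A hA.nonneg
  have hGdet : IsUnit G.det := by
    have hdet : G.det * G.det = A.det := by rw [← det_mul, hG]
    exact isUnit_of_mul_isUnit_left (hdet ▸ hAdet)
  have hcomm : B * G = G * B :=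
    commute_of_commute_sq (CFC.sqrt_nonneg A).posSemidef hGdet hB.isHermitian (by rw [hG]; exact hc.symm)
  have hGh : Gᴴ = G := (CFC.sqrt_nonneg A).posSemidef.isHermitian
  have heq : A * B = G * B * Gᴴ := by
    rw [hGh]
    calc A * B = G * G * B := by rw [hG]
    _ = G * (B * G) := by rw [Matrix.mul_assoc, hcomm]
    _ = G * B * G := by rw [Matrix.mul_assoc]
  exact heq ▸ hB.mul_mul_conjTranspose_same G

lemma matSqrt_psd {d : ℕ} {S : Matrix (Fin d) (Fin d) ℝ} (h : S.PosSemidef) :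
    (matSqrt S).PosSemidef := by
  rw [matSqrt_eq_cfc h]; exact (CFC.sqrt_nonneg S).posSemidef

lemma matSqrt_mul_self {d : ℕ} {S : Matrix (Fin d) (Fin d) ℝ} (h : S.PosSemidef) :
    matSqrt S * matSqrt S = S := by
  rw [matSqrt_eq_cfc h]; exact CFC.sqrt_mul_sqrt_self S h.nonneg

lemma matSqrt_det_isUnit {d : ℕ} {S : Matrix (Fin d) (Fin d) ℝ} (h : S.PosDef) :
    IsUnit (matSqrt S).det := by
  have hd : (matSqrt S).det * (matSqrt S).det = S.det := by
    rw [← det_mul, matSqrt_mul_self h.posSemidef]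
  rw [isUnit_iff_ne_zero]
  intro h0
  have := h.det_pos
  rw [← hd, h0, mul_zero] at this
  exact lt_irrefl _ this

lemma Smat_eq {d : ℕ} {Ss Sj : Matrix (Fin d) (Fin d) ℝ} (hSs : Ss.PosDef)
    (hj : Sj.PosSemidef) (hc : matSqrt Ss * matSqrt Sj = matSqrt Sj * matSqrt Ss) :
    Smat Ss Sj = matSqrt Sj * (matSqrt Ss)⁻¹ := by
  set A := matSqrt Ss with hA
  set B := matSqrt Sj with hB
  have hApsd : A.PosSemidef := matSqrt_psd hSs.posSemidef
  have hBpsd : B.PosSemidef := matSqrt_psd hj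
  have hBB : B * B = Sj := matSqrt_mul_self hj
  have hAdet : IsUnit A.det := matSqrt_det_isUnit hSs
  have hABpsd : (A * B).PosSemidef := mul_psd_of_commute hApsd hAdet hBpsd hc
  have hsq : (A * B) ^ 2 = A * Sj * A := by
    rw [pow_two, ← hBB]
    calc A * B * (A * B) = A * B * (B * A) := by rw [hc]
    _ = A * (B * B) * A := by simp only [Matrix.mul_assoc]
  have hASA : (A * Sj * A).PosSemidef := hsq ▸ hABpsd.pow 2
  have hsqrt : matSqrt (A * Sj * A) = A * B := by
    rw [matSqrt_eq_cfc hASA]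
    exact (CFC.sqrt_eq_iff _ _ hASA.nonneg hABpsd.nonneg).mpr (by rw [← pow_two]; exact hsq)
  rw [Smat, hsqrt, ← hA, ← Matrix.mul_assoc, Matrix.nonsing_inv_mul A hAdet, Matrix.one_mul]

/-- If `Σ*` is symmetric positive definite, `Σ₁, Σ₂` symmetric positive
semidefinite, and `Σ*^{1/2}` commutes with `Σ₁^{1/2}` and `Σ₂^{1/2}`, then
`S(Σ*,Σⱼ) = Σⱼ^{1/2}Σ*^{-1/2}`, hence
`φ_{μ*}(N(mⱼ,Σⱼ)) = (mⱼ − Σⱼ^{1/2}Σ*^{-1/2}m*, Σⱼ^{1/2}Σ*^{-1/2} − I)`, and moreover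
`‖φ_{μ*}(N(m₁,Σ₁)) − φ_{μ*}(N(m₂,Σ₂))‖²_{(m*,Σ*)} = ‖m₁−m₂‖² + tr((Σ₁^{1/2}−Σ₂^{1/2})²)`. -/
theorem stmt_4 {d : ℕ} (ms m1 m2 : Fin d → ℝ) (Ss S1 S2 : Matrix (Fin d) (Fin d) ℝ)
    (hSs : Ss.PosDef) (h1 : S1.PosSemidef) (h2 : S2.PosSemidef)
    (hc1 : matSqrt Ss * matSqrt S1 = matSqrt S1 * matSqrt Ss)
    (hc2 : matSqrt Ss * matSqrt S2 = matSqrt S2 * matSqrt Ss) :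
    Smat Ss S1 = matSqrt S1 * (matSqrt Ss)⁻¹ ∧
    Smat Ss S2 = matSqrt S2 * (matSqrt Ss)⁻¹ ∧
    (m1 - (Smat Ss S1).mulVec ms, Smat Ss S1 - 1)
      = (m1 - (matSqrt S1 * (matSqrt Ss)⁻¹).mulVec ms, matSqrt S1 * (matSqrt Ss)⁻¹ - 1) ∧
    (m2 - (Smat Ss S2).mulVec ms, Smat Ss S2 - 1)
      = (m2 - (matSqrt S2 * (matSqrt Ss)⁻¹).mulVec ms, matSqrt S2 * (matSqrt Ss)⁻¹ - 1) ∧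
    xiNormSq ms Ss
        ((m1 - (Smat Ss S1).mulVec ms) - (m2 - (Smat Ss S2).mulVec ms))
        ((Smat Ss S1 - 1) - (Smat Ss S2 - 1))
      = (∑ i, (m1 i - m2 i) ^ 2)
        + ((matSqrt S1 - matSqrt S2) * (matSqrt S1 - matSqrt S2)).trace := by
  have e1 : Smat Ss S1 = matSqrt S1 * (matSqrt Ss)⁻¹ := Smat_eq hSs h1 hc1
  have e2 : Smat Ss S2 = matSqrt S2 * (matSqrt Ss)⁻¹ := Smat_eq hSs h2 hc2
  refine ⟨e1, e2, by rw [e1], by rw [e2], ?_⟩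
  set A := matSqrt Ss with hA
  set B1 := matSqrt S1 with hB1
  set B2 := matSqrt S2 with hB2
  have hAdet : IsUnit A.det := matSqrt_det_isUnit hSs
  have hAA : A * A = Ss := matSqrt_mul_self hSs.posSemidef
  set C := B1 - B2 with hC
  have hcC : A * C = C * A := by rw [hC, mul_sub, sub_mul, hc1, hc2]
  have hVeq : (Smat Ss S1 - 1) - (Smat Ss S2 - 1) = C * A⁻¹ := by
    rw [e1, e2, hC, Matrix.sub_mul]
    abel
  rw [xiNormSq, hVeq]
  congr 1
  · -- vector part
    apply Finset.sum_congr rfl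
    intro i _
    rw [e1, e2]
    have : C * A⁻¹ = B1 * A⁻¹ - B2 * A⁻¹ := by rw [hC, Matrix.sub_mul]
    rw [this]
    simp only [Pi.sub_apply, Matrix.sub_mulVec, Pi.sub_apply]
    ring
  · -- trace part
    congr 1
    rw [← hAA]
    calc C * A⁻¹ * (A * A) * (C * A⁻¹)
        = C * (A⁻¹ * A) * A * C * A⁻¹ := by simp only [Matrix.mul_assoc]
    _ = C * A * C * A⁻¹ := by
        rw [Matrix.nonsing_inv_mul A hAdet, Matrix.mul_one]
    _ = C * C * A * A⁻¹ := by
        rw [Matrix.mul_assoc C A C, hcC, ← Matrix.mul_assoc, Matrix.mul_assoc]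
    _ = C * C := by rw [Matrix.mul_assoc, Matrix.mul_nonsing_inv A hAdet, Matrix.mul_one]
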